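/- Let f be holomorphic on the strip {s : |Re s| ≤ σ} (σ > 0) with sufficient decay in |Im s|, let g(s) = (s² - a²)(s² - b²)/(a²b²) with a,b nonzero complex numbers satisfying |Re a|, |Re b| < σ, and suppose f satisfies f(-s) = f(s) for all s. Then (1/2πi)∫_{(σ)} g(s) f(s) ds/s = f(0)/2, where the integral is over the vertical line Re s = σ. -/

import Mathlib

open Complex MeasureTheory Filter Set intervalIntegral

private lemma hasDerivAt_line (c : ℂ) (d : ℂ) (y : ℝ) :
    HasDerivAt (fun y : ℝ => c + y * d) d y := by
  simpa using (((Complex.ofRealCLM.hasDerivAt (x := y)).mul_const d).const_add c)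

private lemma hasDerivAt_log_line (c d : ℂ) (y : ℝ) (hs : c + y * d ∈ Complex.slitPlane) :
    HasDerivAt (fun y : ℝ => log (c + y * d)) (d * (c + y * d)⁻¹) y := by
  have h2 := (Complex.hasDerivAt_log hs).scomp y (hasDerivAt_line c d y)
  simp only [smul_eq_mul] at h2; exact h2

private lemma cont_inv_line (c d : ℂ) (h : ∀ y : ℝ, c + y * d ≠ 0) :
    Continuous fun y : ℝ => (c + y * d)⁻¹ :=
  (continuous_const.add (Complex.continuous_ofReal.mul continuous_const)).inv₀ h

-- vertical line integral, Re = c with c > 0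
private lemma vert_pos (c : ℝ) (hc : 0 < c) (T : ℝ) :
    I • ∫ y : ℝ in (-T)..T, ((c : ℂ) + y * I)⁻¹
      = log ((c : ℂ) + T * I) - log ((c : ℂ) + (-T) * I) := by
  simp only [smul_eq_mul]
  rw [← intervalIntegral.integral_const_mul]
  have hne : ∀ y : ℝ, (c : ℂ) + y * I ≠ 0 := fun y h => by
    have := congrArg Complex.re h; simp at this; linarith
  rw [intervalIntegral.integral_eq_sub_of_hasDerivAt
    (f := fun y : ℝ => log ((c : ℂ) + y * I)) (f' := fun y : ℝ => I * ((c : ℂ) + y * I)⁻¹)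
    (fun x _ => by
      have := hasDerivAt_log_line (c : ℂ) I x (by
        simp [Complex.mem_slitPlane_iff]; left; exact hc)
      exact this)
    ((continuous_const.mul (cont_inv_line _ _ hne)).intervalIntegrable _ _)]
  push_cast; ring_nf

-- vertical line integral, Re = -c with c > 0
private lemma vert_neg (c : ℝ) (hc : 0 < c) (T : ℝ) :
    I • ∫ y : ℝ in (-T)..T, ((-c : ℝ) + y * I : ℂ)⁻¹
      = log ((c : ℂ) + (-T) * I) - log ((c : ℂ) + T * I) := by
  simp only [smul_eq_mul]
  rw [← intervalIntegral.integral_const_mul]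
  have key : ∀ x : ℝ, HasDerivAt (fun y : ℝ => log ((c : ℂ) + y * (-I)))
      (I * (((-c : ℝ) : ℂ) + x * I)⁻¹) x := by
    intro x
    have h := hasDerivAt_log_line (c : ℂ) (-I) x (by
      simp [Complex.mem_slitPlane_iff]; left; exact hc)
    convert h using 1
    have h1 : ((c : ℂ) + x * (-I)) = -(((-c : ℝ) : ℂ) + x * I) := by push_cast; ring
    rw [h1, inv_neg]
    ring
  have hne : ∀ y : ℝ, ((-c : ℝ) : ℂ) + y * I ≠ 0 := fun y h => by
    have := congrArg Complex.re h; simp at this; linarith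
  rw [intervalIntegral.integral_eq_sub_of_hasDerivAt (fun x _ => key x)
    ((continuous_const.mul (cont_inv_line _ _ hne)).intervalIntegrable _ _)]
  push_cast; ring_nf

-- horizontal segment, Im = d ≠ 0
private lemma horiz (d : ℝ) (hd : d ≠ 0) (u v : ℝ) :
    ∫ x : ℝ in u..v, ((x : ℝ) + d * I : ℂ)⁻¹
      = log ((v : ℂ) + d * I) - log ((u : ℂ) + d * I) := by
  have key : ∀ x : ℝ, HasDerivAt (fun y : ℝ => log (((d : ℂ) * I) + y * 1))
      ((((x : ℝ) : ℂ) + d * I)⁻¹) x := by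
    intro x
    have h := hasDerivAt_log_line ((d : ℂ) * I) 1 x (by
      simp [Complex.mem_slitPlane_iff]; right; exact hd)
    simpa [mul_one, add_comm] using h
  have hne : ∀ y : ℝ, ((y : ℝ) : ℂ) + d * I ≠ 0 := fun y h => by
    have := congrArg Complex.im h; simp at this; exact hd this
  rw [intervalIntegral.integral_eq_sub_of_hasDerivAt (fun x _ => key x) ?_]
  · rw [show ((d : ℂ) * I + v * 1) = (v : ℂ) + d * I by ring,
      show ((d : ℂ) * I + u * 1) = (u : ℂ) + d * I by ring]
  · exact ((cont_inv_line ((d:ℂ)*I) 1 (fun y h => hne y (by rw [← h]; ring))).congr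
      (fun y => by ring_nf)).intervalIntegrable _ _

private lemma rectInv (σ T : ℝ) (hσ : 0 < σ) (hT : 0 < T) :
    (∫ x : ℝ in (-σ)..σ, ((x : ℝ) + (-T) * I : ℂ)⁻¹)
      - (∫ x : ℝ in (-σ)..σ, ((x : ℝ) + T * I : ℂ)⁻¹)
      + I • (∫ y : ℝ in (-T)..T, ((σ : ℝ) + y * I : ℂ)⁻¹)
      - I • (∫ y : ℝ in (-T)..T, ((-σ : ℝ) + y * I : ℂ)⁻¹)
    = 2 * Real.pi * I := by
  have h1 := horiz (-T) (by linarith : (-T:ℝ) ≠ 0) (-σ) σ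
  have h2 := horiz T (by linarith : (T:ℝ) ≠ 0) (-σ) σ
  have h3 := vert_pos σ hσ T
  have h4 := vert_neg σ hσ T
  push_cast at h1 h2 h3 h4 ⊢
  rw [h1, h2, h3, h4]
  set z : ℂ := (σ : ℂ) + T * I with hz
  have hzre : z.re = σ := by simp [hz]
  have hzim : z.im = T := by simp [hz]
  have hconj : (starRingEnd ℂ) z = (σ : ℂ) + -(T:ℂ) * I := by
    rw [hz]; simp [Complex.ext_iff]
  have hneg : -z = -(σ:ℂ) + -(T:ℂ) * I := by rw [hz]; ring
  have hnegconj : -((starRingEnd ℂ) z) = -(σ:ℂ) + (T:ℂ) * I := by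
    rw [hconj]; ring
  have hargz : z.arg ≠ Real.pi := by
    intro h
    rw [Complex.arg_eq_pi_iff] at h
    rw [hzre] at h; linarith [h.1]
  have e1 : ((starRingEnd ℂ) z).arg = -z.arg := by
    rw [Complex.arg_conj, if_neg hargz]
  have e2 : (-z).arg = z.arg - Real.pi :=
    Complex.arg_neg_eq_arg_sub_pi_of_im_pos (by rw [hzim]; exact hT)
  have e3 : (-((starRingEnd ℂ) z)).arg = ((starRingEnd ℂ) z).arg + Real.pi :=
    Complex.arg_neg_eq_arg_add_pi_of_im_neg (by simp [hzim]; exact hT)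
  -- rewrite all four points as z, conj z, -z, -conj z
  rw [show ((σ : ℂ) + -(T:ℂ) * I) = (starRingEnd ℂ) z from hconj.symm,
    show (-(σ:ℂ) + -(T:ℂ) * I) = -z from hneg.symm,
    show (-(σ:ℂ) + (T:ℂ) * I) = -((starRingEnd ℂ) z) from hnegconj.symm]
  have habs1 : ‖(starRingEnd ℂ) z‖ = ‖z‖ := by simp
  have habs2 : ‖-z‖ = ‖z‖ := by simp
  have habs3 : ‖-((starRingEnd ℂ) z)‖ = ‖z‖ := by simp
  simp only [Complex.log, habs1, habs2, habs3, e1, e2, e3]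
  push_cast
  ring

private lemma rectG (G : ℂ → ℂ) (σ T : ℝ) (hσ : 0 < σ) (hT : 0 < T)
    (Hc : ContinuousOn G (Set.uIcc (-σ) σ ×ℂ Set.uIcc (-T) T))
    (Hd : ∀ x ∈ (Ioo (-σ) σ ×ℂ Ioo (-T) T) \ {(0 : ℂ)}, DifferentiableAt ℂ G x) :
    (∫ x : ℝ in (-σ)..σ, G ((x : ℝ) + -(T:ℂ) * I))
      - (∫ x : ℝ in (-σ)..σ, G ((x : ℝ) + (T:ℂ) * I))
      + I • (∫ y : ℝ in (-T)..T, G ((σ : ℂ) + y * I))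
      - I • (∫ y : ℝ in (-T)..T, G (-(σ : ℂ) + y * I)) = 0 := by
  have key := Complex.integral_boundary_rect_eq_zero_of_differentiable_on_off_countable
    G (⟨-σ, -T⟩ : ℂ) (⟨σ, T⟩ : ℂ) {(0 : ℂ)} (countable_singleton 0) ?_ ?_
  · have hre1 : (⟨-σ, -T⟩ : ℂ).re = -σ := rfl
    have hre2 : (⟨σ, T⟩ : ℂ).re = σ := rfl
    have him1 : (⟨-σ, -T⟩ : ℂ).im = -T := rfl
    have him2 : (⟨σ, T⟩ : ℂ).im = T := rfl
    rw [hre1, hre2, him1, him2] at key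
    push_cast at key ⊢
    convert key using 4 <;> push_cast <;> ring_nf
  · have hre1 : (⟨-σ, -T⟩ : ℂ).re = -σ := rfl
    have hre2 : (⟨σ, T⟩ : ℂ).re = σ := rfl
    have him1 : (⟨-σ, -T⟩ : ℂ).im = -T := rfl
    have him2 : (⟨σ, T⟩ : ℂ).im = T := rfl
    rw [hre1, hre2, him1, him2]
    exact Hc
  · have hre1 : (⟨-σ, -T⟩ : ℂ).re = -σ := rfl
    have hre2 : (⟨σ, T⟩ : ℂ).re = σ := rfl
    have him1 : (⟨-σ, -T⟩ : ℂ).im = -T := rfl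
    have him2 : (⟨σ, T⟩ : ℂ).im = T := rfl
    rw [hre1, hre2, him1, him2, min_eq_left (by linarith : -σ ≤ σ),
      max_eq_right (by linarith : -σ ≤ σ), min_eq_left (by linarith : -T ≤ T),
      max_eq_right (by linarith : -T ≤ T)]
    exact Hd

section Main
variable (σ : ℝ) (f : ℂ → ℂ) (a b : ℂ)

private noncomputable def FF (σ : ℝ) (f : ℂ → ℂ) (a b : ℂ) : ℂ → ℂ := fun s =>
  (s ^ 2 - a ^ 2) * (s ^ 2 - b ^ 2) / (a ^ 2 * b ^ 2) * f s / s

private noncomputable def phi (f : ℂ → ℂ) (a b : ℂ) : ℂ → ℂ := fun s =>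
  (s ^ 2 - a ^ 2) * (s ^ 2 - b ^ 2) / (a ^ 2 * b ^ 2) * f s

private lemma FF_eq (ha : a ≠ 0) (hb : b ≠ 0) {s : ℂ} (hs : s ≠ 0) :
    FF σ f a b s = dslope (phi f a b) 0 s + f 0 * s⁻¹ := by
  have hab : a ^ 2 * b ^ 2 ≠ 0 := by
    exact mul_ne_zero (pow_ne_zero _ ha) (pow_ne_zero _ hb)
  have hphi0 : phi f a b 0 = f 0 := by
    simp only [phi]
    rw [show ((0:ℂ) ^ 2 - a ^ 2) * ((0:ℂ) ^ 2 - b ^ 2) = a ^ 2 * b ^ 2 by ring,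
      div_self hab, one_mul]
  rw [dslope_of_ne _ hs, slope_def_field, hphi0]
  simp only [FF, phi, div_eq_mul_inv, sub_zero]
  field_simp
  ring

private lemma rectF (hσ : 0 < σ) (hf : DifferentiableOn ℂ f {s : ℂ | |s.re| ≤ σ})
    (ha : a ≠ 0) (hb : b ≠ 0) (T : ℝ) (hT : 0 < T) :
    (∫ x : ℝ in (-σ)..σ, FF σ f a b ((x : ℝ) + -(T:ℂ) * I))
      - (∫ x : ℝ in (-σ)..σ, FF σ f a b ((x : ℝ) + (T:ℂ) * I))
      + I • (∫ y : ℝ in (-T)..T, FF σ f a b ((σ : ℂ) + y * I))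
      - I • (∫ y : ℝ in (-T)..T, FF σ f a b (-(σ : ℂ) + y * I))
    = f 0 * (2 * Real.pi * I) := by
  set G := dslope (phi f a b) 0 with hG
  have hU : IsOpen {s : ℂ | |s.re| < σ} :=
    isOpen_lt (continuous_abs.comp Complex.continuous_re) continuous_const
  have hUS : {s : ℂ | |s.re| < σ} ⊆ {s : ℂ | |s.re| ≤ σ} := fun s hs => by simp only [Set.mem_setOf_eq] at *; linarith
  have hphiS : DifferentiableOn ℂ (phi f a b) {s : ℂ | |s.re| ≤ σ} := by
    apply DifferentiableOn.mul _ hf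
    exact (((differentiable_id.pow 2).sub_const _).mul
      ((differentiable_id.pow 2).sub_const _)).div_const _ |>.differentiableOn
  have hphiAt : ∀ s : ℂ, |s.re| < σ → DifferentiableAt ℂ (phi f a b) s := fun s hs =>
    (hphiS.mono hUS).differentiableAt (hU.mem_nhds hs)
  have hrectS : (Set.uIcc (-σ) σ ×ℂ Set.uIcc (-T) T) ⊆ {s : ℂ | |s.re| ≤ σ} := by
    intro s hs
    have h1 := hs.1
    rw [Set.uIcc_of_le (by linarith : -σ ≤ σ)] at h1
    exact abs_le.2 ⟨h1.1, h1.2⟩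
  have hmemnhds : (Set.uIcc (-σ) σ ×ℂ Set.uIcc (-T) T) ∈ nhds (0 : ℂ) := by
    rw [mem_nhds_iff]
    refine ⟨Ioo (-σ) σ ×ℂ Ioo (-T) T, ?_, IsOpen.reProdIm isOpen_Ioo isOpen_Ioo, ?_⟩
    · intro s hs
      constructor
      · rw [Set.uIcc_of_le (by linarith : -σ ≤ σ)]; exact Ioo_subset_Icc_self hs.1
      · rw [Set.uIcc_of_le (by linarith : -T ≤ T)]; exact Ioo_subset_Icc_self hs.2
    · constructor <;> simp [hσ, hT]
  have HcG : ContinuousOn G (Set.uIcc (-σ) σ ×ℂ Set.uIcc (-T) T) := by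
    rw [hG, continuousOn_dslope hmemnhds]
    exact ⟨(hphiS.continuousOn).mono hrectS, hphiAt 0 (by simpa using hσ)⟩
  have HdG : ∀ x ∈ (Ioo (-σ) σ ×ℂ Ioo (-T) T) \ {(0 : ℂ)}, DifferentiableAt ℂ G x := by
    intro x hx
    have hx0 : x ≠ 0 := hx.2
    rw [hG]
    exact (differentiableAt_dslope_of_ne hx0).mpr (hphiAt x (abs_lt.2 ⟨hx.1.1.1, hx.1.1.2⟩))
  have hrect := rectG G σ T hσ hT HcG HdG
  have hinv := rectInv σ T hσ hT
  push_cast at hinv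
  -- continuity of G on the rectangle used via paths
  have hvert : ∀ c : ℝ, c ≠ 0 → |c| ≤ σ →
      ∫ y in (-T)..T, FF σ f a b (((c:ℝ):ℂ) + y * I)
        = (∫ y in (-T)..T, G (((c:ℝ):ℂ) + y * I))
          + f 0 * ∫ y in (-T)..T, (((c:ℝ):ℂ) + y * I)⁻¹ := by
    intro c hc hcσ
    have hne : ∀ y : ℝ, ((c:ℝ):ℂ) + y * I ≠ 0 := fun y h => by
      have := congrArg Complex.re h; simp at this; exact hc this
    have hmem : ∀ y : ℝ, y ∈ Set.uIcc (-T) T →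
        ((c:ℝ):ℂ) + y * I ∈ Set.uIcc (-σ) σ ×ℂ Set.uIcc (-T) T := by
      intro y hy
      have hre : (((c:ℝ):ℂ) + y * I).re = c := by simp
      have him : (((c:ℝ):ℂ) + y * I).im = y := by simp
      constructor
      · simp only [Set.mem_preimage]
        rw [hre, Set.uIcc_of_le (by linarith : -σ ≤ σ), Set.mem_Icc]
        exact abs_le.1 hcσ
      · simp only [Set.mem_preimage]
        rw [him]; exact hy
    have hGint : IntervalIntegrable (fun y : ℝ => G (((c:ℝ):ℂ) + y * I)) volume (-T) T := by
      apply ContinuousOn.intervalIntegrable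
      exact HcG.comp ((continuous_const.add
        (Complex.continuous_ofReal.mul continuous_const)).continuousOn) hmem
    have hiint : IntervalIntegrable (fun y : ℝ => f 0 * (((c:ℝ):ℂ) + y * I)⁻¹)
        volume (-T) T := (continuous_const.mul (cont_inv_line _ _ hne)).intervalIntegrable _ _
    rw [intervalIntegral.integral_congr
      (g := fun y : ℝ => G (((c:ℝ):ℂ) + y * I) + f 0 * (((c:ℝ):ℂ) + y * I)⁻¹)
      (fun y _ => FF_eq σ f a b ha hb (hne y)),
      intervalIntegral.integral_add hGint hiint, intervalIntegral.integral_const_mul]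
  have hhoriz : ∀ d : ℝ, d ≠ 0 → |d| ≤ T →
      ∫ x in (-σ)..σ, FF σ f a b (((x:ℝ):ℂ) + ((d:ℝ):ℂ) * I)
        = (∫ x in (-σ)..σ, G (((x:ℝ):ℂ) + ((d:ℝ):ℂ) * I))
          + f 0 * ∫ x in (-σ)..σ, (((x:ℝ):ℂ) + ((d:ℝ):ℂ) * I)⁻¹ := by
    intro d hd hdT
    have hne : ∀ x : ℝ, ((x:ℝ):ℂ) + ((d:ℝ):ℂ) * I ≠ 0 := fun x h => by
      have := congrArg Complex.im h; simp at this; exact hd this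
    have hmem : ∀ x : ℝ, x ∈ Set.uIcc (-σ) σ →
        ((x:ℝ):ℂ) + ((d:ℝ):ℂ) * I ∈ Set.uIcc (-σ) σ ×ℂ Set.uIcc (-T) T := by
      intro x hx
      have hre : (((x:ℝ):ℂ) + ((d:ℝ):ℂ) * I).re = x := by simp
      have him : (((x:ℝ):ℂ) + ((d:ℝ):ℂ) * I).im = d := by simp
      constructor
      · simp only [Set.mem_preimage]
        rw [hre]; exact hx
      · simp only [Set.mem_preimage]
        rw [him, Set.uIcc_of_le (by linarith : -T ≤ T), Set.mem_Icc]
        exact abs_le.1 hdT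
    have hGint : IntervalIntegrable (fun x : ℝ => G (((x:ℝ):ℂ) + ((d:ℝ):ℂ) * I))
        volume (-σ) σ := by
      apply ContinuousOn.intervalIntegrable
      exact HcG.comp ((Complex.continuous_ofReal.add continuous_const).continuousOn) hmem
    have hiint : IntervalIntegrable (fun x : ℝ => f 0 * (((x:ℝ):ℂ) + ((d:ℝ):ℂ) * I)⁻¹)
        volume (-σ) σ := by
      apply Continuous.intervalIntegrable
      exact continuous_const.mul
        ((Complex.continuous_ofReal.add continuous_const).inv₀ hne)
    rw [intervalIntegral.integral_congr
      (g := fun x : ℝ => G (((x:ℝ):ℂ) + ((d:ℝ):ℂ) * I) + f 0 * (((x:ℝ):ℂ) + ((d:ℝ):ℂ) * I)⁻¹)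
      (fun x _ => FF_eq σ f a b ha hb (hne x)),
      intervalIntegral.integral_add hGint hiint, intervalIntegral.integral_const_mul]
  have hv1 := hvert σ (ne_of_gt hσ) (by rw [abs_of_pos hσ])
  have hv2 := hvert (-σ) (by linarith) (by rw [abs_neg, abs_of_pos hσ])
  have hh1 := hhoriz T (ne_of_gt hT) (by rw [abs_of_pos hT])
  have hh2 := hhoriz (-T) (by linarith) (by rw [abs_neg, abs_of_pos hT])
  push_cast at hv1 hv2 hh1 hh2
  simp only [smul_eq_mul] at hrect hinv ⊢
  rw [hv1, hv2, hh1, hh2]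
  linear_combination hrect + f 0 * hinv

private lemma normFF_le (hσ : 0 < σ) (ha : a ≠ 0) (hb : b ≠ 0) (C : ℝ) (s : ℂ)
    (hfs : ‖f s‖ ≤ C * Real.exp (-|s.im|)) (hsre : s.re ^ 2 ≤ σ ^ 2) (hs0 : s ≠ 0) :
    ‖FF σ f a b s‖ ≤ (σ ^ 2 + s.im ^ 2 + ‖a‖ ^ 2) * (σ ^ 2 + s.im ^ 2 + ‖b‖ ^ 2) /
      (‖a‖ ^ 2 * ‖b‖ ^ 2) * (C * Real.exp (-|s.im|)) / ‖s‖ := by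
  have hs2 : ‖s‖ ^ 2 = s.re ^ 2 + s.im ^ 2 := by
    rw [Complex.sq_norm, Complex.normSq_apply]; ring
  have hsa : ‖s ^ 2 - a ^ 2‖ ≤ σ ^ 2 + s.im ^ 2 + ‖a‖ ^ 2 := by
    refine (norm_sub_le _ _).trans ?_
    rw [norm_pow, norm_pow, hs2]
    nlinarith [norm_nonneg a]
  have hsb : ‖s ^ 2 - b ^ 2‖ ≤ σ ^ 2 + s.im ^ 2 + ‖b‖ ^ 2 := by
    refine (norm_sub_le _ _).trans ?_
    rw [norm_pow, norm_pow, hs2]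
    nlinarith [norm_nonneg b]
  have hCe : (0:ℝ) ≤ C * Real.exp (-|s.im|) := le_trans (norm_nonneg _) hfs
  have heq : ‖FF σ f a b s‖
      = ‖s ^ 2 - a ^ 2‖ * ‖s ^ 2 - b ^ 2‖ / (‖a‖ ^ 2 * ‖b‖ ^ 2) * ‖f s‖ / ‖s‖ := by
    simp only [FF]
    rw [norm_div, norm_mul, norm_div, norm_mul, norm_mul, norm_pow, norm_pow]
  rw [heq]
  gcongr

private lemma tendsto_polyexp (p : Polynomial ℝ) (c : ℝ) (hc : 0 < c) :
    Filter.Tendsto (fun t : ℝ => p.eval t * Real.exp (-(c * t))) atTop (nhds 0) := by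
  have h1 := (Polynomial.tendsto_div_exp_atTop (p.comp (Polynomial.C c⁻¹ * Polynomial.X))).comp
    (Filter.Tendsto.const_mul_atTop hc Filter.tendsto_id)
  refine h1.congr fun t => ?_
  simp only [Function.comp_apply, Polynomial.eval_comp, Polynomial.eval_mul, Polynomial.eval_C,
    Polynomial.eval_X, id]
  rw [inv_mul_cancel_left₀ (ne_of_gt hc), Real.exp_neg, div_eq_mul_inv]

private lemma integrable_even_polyexp (k₁ k₂ K : ℝ) :
    Integrable (fun t : ℝ => K * ((k₁ + t ^ 2) * (k₂ + t ^ 2)) * Real.exp (-|t|)) := by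
  set g : ℝ → ℝ := fun t => K * ((k₁ + t ^ 2) * (k₂ + t ^ 2)) * Real.exp (-|t|) with hg
  have hcont : Continuous g := by
    apply Continuous.mul
    · fun_prop
    · exact Real.continuous_exp.comp (continuous_abs.neg)
  have hIoi : IntegrableOn g (Ioi 0) := by
    apply integrable_of_isBigO_exp_neg (one_half_pos) (hcont.continuousOn (s := Ici 0))
    rw [Asymptotics.isBigO_iff]
    refine ⟨1, ?_⟩
    have htend : Filter.Tendsto
        (fun t : ℝ => (Polynomial.C K * (Polynomial.C k₁ + Polynomial.X ^ 2) *
          (Polynomial.C k₂ + Polynomial.X ^ 2)).eval t * Real.exp (-((1/2 : ℝ) * t)))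
        atTop (nhds 0) := tendsto_polyexp _ _ one_half_pos
    have hev := (htend.eventually (eventually_abs_sub_lt 0 one_pos))
    filter_upwards [hev, Filter.eventually_ge_atTop (0:ℝ)] with t ht ht0
    simp only [sub_zero] at ht
    have habs : |t| = t := abs_of_nonneg ht0
    have he : Real.exp (-t) = Real.exp (-((1/2:ℝ) * t)) * Real.exp (-((1/2:ℝ) * t)) := by
      rw [← Real.exp_add]; ring_nf
    have hsplit : g t = ((Polynomial.C K * (Polynomial.C k₁ + Polynomial.X ^ 2) *
        (Polynomial.C k₂ + Polynomial.X ^ 2)).eval t * Real.exp (-((1/2:ℝ) * t)))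
          * Real.exp (-((1/2:ℝ) * t)) := by
      simp only [hg, Polynomial.eval_mul, Polynomial.eval_add, Polynomial.eval_C,
        Polynomial.eval_pow, Polynomial.eval_X, habs]
      rw [he]; ring
    rw [hsplit, Real.norm_eq_abs, Real.norm_eq_abs, abs_mul, one_mul,
      show (-(1/2 : ℝ) * t) = -((1/2:ℝ) * t) by ring,
      abs_of_pos (Real.exp_pos (-((1/2:ℝ)*t)))]
    exact mul_le_of_le_one_left (le_of_lt (Real.exp_pos _)) (le_of_lt ht)
  have hIic : IntegrableOn g (Iic 0) := by
    rw [← Measure.map_neg_eq_self (volume : Measure ℝ)]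
    have m : MeasurableEmbedding fun x : ℝ => -x := (Homeomorph.neg ℝ).measurableEmbedding
    rw [m.integrableOn_map_iff]
    have : (g ∘ fun x : ℝ => -x) = g := by
      funext x; simp only [Function.comp_apply, hg, abs_neg, neg_sq]
    rw [this]
    simp only [neg_preimage, neg_Iic, neg_zero]
    exact (integrableOn_Ici_iff_integrableOn_Ioi).mpr hIoi
  rw [← integrableOn_univ, ← Set.Iic_union_Ioi (a := (0:ℝ)), integrableOn_union]
  exact ⟨hIic, hIoi⟩
end Main

set_option maxHeartbeats 1000000 in
theorem stmt4 (σ : ℝ) (hσ : 0 < σ) (f : ℂ → ℂ)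
    (hf : DifferentiableOn ℂ f {s : ℂ | |s.re| ≤ σ})
    (hdecay : ∃ C : ℝ, ∀ s : ℂ, |s.re| ≤ σ → ‖f s‖ ≤ C * Real.exp (-|s.im|))
    (a b : ℂ) (ha : a ≠ 0) (hb : b ≠ 0) (hra : |a.re| < σ) (hrb : |b.re| < σ)
    (hsym : ∀ s : ℂ, f (-s) = f s) :
    (1 / (2 * Real.pi * I)) *
      ∫ t : ℝ, ((((σ : ℂ) + t * I) ^ 2 - a ^ 2) * (((σ : ℂ) + t * I) ^ 2 - b ^ 2) /
          (a ^ 2 * b ^ 2)) * f ((σ : ℂ) + t * I) / ((σ : ℂ) + t * I) * I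
    = f 0 / 2 := by
  obtain ⟨C, hC⟩ := hdecay
  show (1 / (2 * (Real.pi:ℂ) * I)) * (∫ t : ℝ, FF σ f a b ((σ:ℂ) + t * I) * I) = f 0 / 2
  have hA : (0:ℝ) < ‖a‖ ^ 2 := pow_pos (norm_pos_iff.mpr ha) 2
  have hB : (0:ℝ) < ‖b‖ ^ 2 := pow_pos (norm_pos_iff.mpr hb) 2
  -- integrability on vertical lines
  have hint : ∀ c : ℝ, |c| = σ →
      Integrable (fun t : ℝ => FF σ f a b ((c:ℂ) + t * I) * I) := by
    intro c hcabs
    have hcne : c ≠ 0 := fun h => by rw [h] at hcabs; simp at hcabs; linarith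
    have hne : ∀ t : ℝ, ((c:ℂ) + t * I) ≠ 0 := fun t h => by
      have := congrArg Complex.re h; simp at this; exact hcne this
    have hre : ∀ t : ℝ, ((c:ℂ) + t * I).re = c := fun t => by simp
    have him : ∀ t : ℝ, ((c:ℂ) + t * I).im = t := fun t => by simp
    have hmem : ∀ t : ℝ, ((c:ℂ) + t * I) ∈ {s : ℂ | |s.re| ≤ σ} := fun t => by
      simp only [Set.mem_setOf_eq, hre]; rw [hcabs]
    have hlinecont : Continuous fun t : ℝ => (c:ℂ) + t * I :=
      continuous_const.add (Complex.continuous_ofReal.mul continuous_const)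
    have hcont : Continuous fun t : ℝ => FF σ f a b ((c:ℂ) + t * I) * I := by
      apply Continuous.mul _ continuous_const
      simp only [FF]
      apply Continuous.mul
      apply Continuous.mul
      · fun_prop
      · exact (hf.continuousOn.comp_continuous hlinecont hmem)
      · exact (hlinecont.inv₀ hne)
    apply Integrable.mono'
      (integrable_even_polyexp (σ^2 + ‖a‖^2) (σ^2 + ‖b‖^2) (C / (‖a‖^2 * ‖b‖^2 * σ)))
      hcont.aestronglyMeasurable
    apply Filter.Eventually.of_forall
    intro t
    have hb1 := normFF_le σ f a b hσ ha hb C ((c:ℂ) + t * I)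
      (hC _ (hmem t)) (by rw [hre]; exact le_of_eq (by rw [← hcabs, _root_.sq_abs]))
      (hne t)
    rw [him] at hb1
    have hnorm : ‖FF σ f a b ((c:ℂ) + t * I) * I‖ = ‖FF σ f a b ((c:ℂ) + t * I)‖ := by
      rw [norm_mul, Complex.norm_I, mul_one]
    rw [hnorm]
    refine hb1.trans ?_
    have hsge : σ ≤ ‖(c:ℂ) + t * I‖ := by
      rw [← hcabs]
      have := Complex.abs_re_le_norm ((c:ℂ) + t * I)
      rwa [hre] at this
    have hX : (0:ℝ) ≤ (σ ^ 2 + t ^ 2 + ‖a‖ ^ 2) * (σ ^ 2 + t ^ 2 + ‖b‖ ^ 2) /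
        (‖a‖ ^ 2 * ‖b‖ ^ 2) * (C * Real.exp (-|t|)) := by
      have hfs := hC _ (hmem t)
      rw [him] at hfs
      exact mul_nonneg (by positivity) (le_trans (norm_nonneg _) hfs)
    refine (div_le_div_of_nonneg_left hX hσ hsge).trans (le_of_eq ?_)
    field_simp
    ring
  have hΦint := hint σ (abs_of_pos hσ)
  have hΦ'int := hint (-σ) (by rw [abs_neg, abs_of_pos hσ])
  set JR : ℂ := ∫ t : ℝ, FF σ f a b ((σ:ℂ) + t * I) * I with hJRdef
  -- symmetry
  have hFFneg : ∀ s : ℂ, FF σ f a b (-s) = -FF σ f a b s := by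
    intro s
    simp only [FF]
    rw [show ((-s:ℂ)^2) = s^2 from by ring, hsym, div_neg]
  have hJL : (∫ t : ℝ, FF σ f a b ((-σ:ℝ) + t * I) * I) = -JR := by
    have h1 : (∫ t : ℝ, FF σ f a b ((-σ:ℝ) + (-t:ℝ) * I) * I)
        = ∫ t : ℝ, FF σ f a b ((-σ:ℝ) + t * I) * I :=
      MeasureTheory.integral_neg_eq_self (fun t : ℝ => FF σ f a b ((-σ:ℝ) + t * I) * I) volume
    rw [← h1]
    have h2 : ∀ t : ℝ, FF σ f a b ((-σ:ℝ) + (-t:ℝ) * I) * I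
        = -(FF σ f a b ((σ:ℂ) + t * I) * I) := by
      intro t
      rw [show (((-σ:ℝ):ℂ) + ((-t:ℝ):ℂ) * I) = -((σ:ℂ) + t * I) from by push_cast; ring,
        hFFneg, neg_mul]
    rw [hJRdef, ← MeasureTheory.integral_neg]
    exact integral_congr_ae (Filter.Eventually.of_forall h2)
    -- horizontal bounds
  have hhorb : ∀ d : ℝ, 1 ≤ |d| →
      ‖∫ x in (-σ:ℝ)..σ, FF σ f a b ((x:ℂ) + (d:ℂ) * I)‖
        ≤ ((σ^2 + d^2 + ‖a‖^2) * (σ^2 + d^2 + ‖b‖^2) / (‖a‖^2 * ‖b‖^2) *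
            (C * Real.exp (-|d|))) * |σ - (-σ)| := by
    intro d hd
    apply intervalIntegral.norm_integral_le_of_norm_le_const
    intro x hx
    have hdne : d ≠ 0 := fun h => by rw [h] at hd; simp at hd; linarith
    have hx' : |x| ≤ σ := by
      rw [Set.uIoc_of_le (by linarith : -σ ≤ σ)] at hx
      rw [abs_le]; exact ⟨le_of_lt hx.1, hx.2⟩
    have hne : ((x:ℂ) + (d:ℂ) * I) ≠ 0 := fun h => by
      have := congrArg Complex.im h; simp at this; exact hdne this
    have hre : ((x:ℂ) + (d:ℂ) * I).re = x := by simp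
    have him : ((x:ℂ) + (d:ℂ) * I).im = d := by simp
    have hb1 := normFF_le σ f a b hσ ha hb C ((x:ℂ) + (d:ℂ) * I)
      (hC _ (by simp only [Set.mem_setOf_eq, hre]; exact hx'))
      (by rw [hre]; nlinarith [abs_nonneg x, le_abs_self x, neg_abs_le x])
      hne
    rw [him] at hb1
    refine hb1.trans ?_
    have h1 : (1:ℝ) ≤ ‖(x:ℂ) + (d:ℂ) * I‖ := by
      refine le_trans hd ?_
      simpa [him] using Complex.abs_im_le_norm ((x:ℂ) + (d:ℂ) * I)
    have hfs := hC _ (show ((x:ℂ) + (d:ℂ) * I) ∈ {s : ℂ | |s.re| ≤ σ} by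
      simp only [Set.mem_setOf_eq, hre]; exact hx')
    rw [him] at hfs
    exact div_le_self (mul_nonneg (by positivity) (le_trans (norm_nonneg _) hfs)) h1
  set g : ℝ → ℝ := fun T => (σ^2+T^2+‖a‖^2) * (σ^2+T^2+‖b‖^2) / (‖a‖^2*‖b‖^2) *
      (C * Real.exp (-T)) * |σ - (-σ)| with hgdef
  have hgt : Filter.Tendsto g atTop (nhds 0) := by
    have h := tendsto_polyexp (Polynomial.C (C * |σ - (-σ)| / (‖a‖^2*‖b‖^2)) *
      ((Polynomial.C (σ^2+‖a‖^2) + Polynomial.X^2) *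
        (Polynomial.C (σ^2+‖b‖^2) + Polynomial.X^2))) 1 one_pos
    refine h.congr fun T => ?_
    simp only [Polynomial.eval_mul, Polynomial.eval_add, Polynomial.eval_pow,
      Polynomial.eval_C, Polynomial.eval_X, one_mul, hgdef]
    field_simp
    ring
  have htop : Filter.Tendsto (fun T : ℝ => ∫ x in (-σ:ℝ)..σ, FF σ f a b ((x:ℂ) + (T:ℂ) * I))
      atTop (nhds 0) := by
    apply squeeze_zero_norm' _ hgt
    filter_upwards [Filter.eventually_ge_atTop (1:ℝ)] with T hT
    have h := hhorb T (by rw [_root_.abs_of_nonneg (by linarith)]; exact hT)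
    rw [_root_.abs_of_nonneg (by linarith : (0:ℝ) ≤ T)] at h
    exact h
  have hbot : Filter.Tendsto (fun T : ℝ => ∫ x in (-σ:ℝ)..σ, FF σ f a b ((x:ℂ) + -(T:ℂ) * I))
      atTop (nhds 0) := by
    apply squeeze_zero_norm' _ hgt
    filter_upwards [Filter.eventually_ge_atTop (1:ℝ)] with T hT
    have h := hhorb (-T) (by rw [abs_neg, _root_.abs_of_nonneg (by linarith)]; exact hT)
    rw [abs_neg, _root_.abs_of_nonneg (by linarith : (0:ℝ) ≤ T)] at h
    simp only [neg_sq] at h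
    have hfun : (fun x : ℝ => FF σ f a b ((x:ℂ) + -(T:ℂ) * I))
        = fun x : ℝ => FF σ f a b ((x:ℂ) + ((-T:ℝ):ℂ) * I) := by
      funext x; congr 1; push_cast; ring
    calc ‖∫ x in (-σ:ℝ)..σ, FF σ f a b ((x:ℂ) + -(T:ℂ) * I)‖
        = ‖∫ x in (-σ:ℝ)..σ, FF σ f a b ((x:ℂ) + ((-T:ℝ):ℂ) * I)‖ := by rw [hfun]
      _ ≤ _ := h
  -- vertical limits
  have hVR : Filter.Tendsto (fun T : ℝ => ∫ y in (-T)..T, FF σ f a b ((σ:ℂ) + y * I) * I)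
      atTop (nhds JR) := by
    rw [hJRdef]
    exact intervalIntegral_tendsto_integral hΦint tendsto_neg_atTop_atBot Filter.tendsto_id
  have hVL : Filter.Tendsto (fun T : ℝ => ∫ y in (-T)..T, FF σ f a b (((-σ:ℝ):ℂ) + y * I) * I)
      atTop (nhds (-JR)) := by
    rw [← hJL]
    exact intervalIntegral_tendsto_integral hΦ'int tendsto_neg_atTop_atBot Filter.tendsto_id
  have hq := hVR.sub hVL
  have hq2 : Filter.Tendsto (fun T : ℝ => f 0 * (2 * (Real.pi:ℂ) * I)
      - (∫ x in (-σ:ℝ)..σ, FF σ f a b ((x:ℂ) + -(T:ℂ) * I))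
      + (∫ x in (-σ:ℝ)..σ, FF σ f a b ((x:ℂ) + (T:ℂ) * I)))
      atTop (nhds (f 0 * (2 * (Real.pi:ℂ) * I) - 0 + 0)) :=
    (tendsto_const_nhds.sub hbot).add htop
  have heq : (fun T : ℝ => (∫ y in (-T)..T, FF σ f a b ((σ:ℂ) + y * I) * I)
      - (∫ y in (-T)..T, FF σ f a b (((-σ:ℝ):ℂ) + y * I) * I))
      =ᶠ[atTop] fun T : ℝ => f 0 * (2 * (Real.pi:ℂ) * I)
      - (∫ x in (-σ:ℝ)..σ, FF σ f a b ((x:ℂ) + -(T:ℂ) * I))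
      + (∫ x in (-σ:ℝ)..σ, FF σ f a b ((x:ℂ) + (T:ℂ) * I)) := by
    filter_upwards [Filter.eventually_gt_atTop (0:ℝ)] with T hT
    have hr := rectF σ f a b hσ hf ha hb T hT
    simp only [smul_eq_mul] at hr
    rw [intervalIntegral.integral_mul_const, intervalIntegral.integral_mul_const]
    push_cast
    linear_combination hr
  have huniq : JR - -JR = f 0 * (2 * (Real.pi:ℂ) * I) - 0 + 0 :=
    tendsto_nhds_unique (hq.congr' heq) hq2
  have hJ : JR = f 0 * (Real.pi:ℂ) * I := by linear_combination (1/2 : ℂ) * huniq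
  rw [hJ]
  have hIπ : ((Real.pi:ℝ) : ℂ) ≠ 0 := Complex.ofReal_ne_zero.mpr Real.pi_ne_zero
  field_simp
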